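/- Let σ, b, r be positive reals with σr + (σ−b)(b−1) > 0, let ρ = σ/√(σr + (σ−b)(b−1)), and fix real numbers x, y, z. Let A be the 3×3 real matrix with rows (b−σ−1, −σ/ρ, 0), (−σ/ρ + ρz, −b, −x), (−ρ(y + ((b−1)/σ)x), x, −b), and let M = (A + Aᵀ)/2 be its symmetric part. Then the characteristic polynomial of M equals (X + b)·(X² + (σ+1)X + b(σ−b+1) − (σ/ρ − ρz/2)² − (ρ(b−1)x/(2σ) + ρy/2)²); in particular, the eigenvalues of M are λ₂ = −b and λ_{1,3} = −(σ+1)/2 ± (1/2)·√((σ−2b+1)² + (2σ/ρ − ρz)² + ρ²(y + ((b−1)/σ)x)²). -/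
import Mathlib
open Matrix Polynomial

lemma spec_iff_charpoly' {n : Type*} [Fintype n] [DecidableEq n]
    (M : Matrix n n ℝ) (μ : ℝ) :
    μ ∈ spectrum ℝ M ↔ M.charpoly.eval μ = 0 := by
  rw [spectrum.mem_iff, Matrix.isUnit_iff_isUnit_det, isUnit_iff_ne_zero, not_not,
      Matrix.charpoly, ← Polynomial.coe_evalRingHom, RingHom.map_det]
  have h : (RingHom.mapMatrix (Polynomial.evalRingHom μ)) (charmatrix M)
      = algebraMap ℝ (Matrix n n ℝ) μ - M := by
    ext i j
    by_cases h : i = j <;>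
      simp [h, charmatrix_apply, Matrix.algebraMap_matrix_apply, Matrix.diagonal_apply]
  rw [h]

set_option maxHeartbeats 1000000 in
open Matrix Polynomial in
theorem stmt_5 (σ b r : ℝ) (hσ : 0 < σ) (hb : 0 < b) (hr : 0 < r)
    (hpos : σ * r + (σ - b) * (b - 1) > 0) (x y z : ℝ) :
    let ρ := σ / Real.sqrt (σ * r + (σ - b) * (b - 1))
    let A : Matrix (Fin 3) (Fin 3) ℝ :=
      !![b - σ - 1, -σ / ρ, 0;
         -σ / ρ + ρ * z, -b, -x;
         -ρ * (y + ((b - 1) / σ) * x), x, -b]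
    let M : Matrix (Fin 3) (Fin 3) ℝ := (2 : ℝ)⁻¹ • (A + Aᵀ)
    M.charpoly =
      (X + C b) *
        (X^2 + C (σ + 1) * X +
          C (b * (σ - b + 1) - (σ / ρ - ρ * z / 2)^2
              - (ρ * (b - 1) * x / (2 * σ) + ρ * y / 2)^2)) ∧
    spectrum ℝ M =
      {-b,
       -(σ + 1) / 2 + (1 / 2) * Real.sqrt ((σ - 2 * b + 1)^2
          + (2 * σ / ρ - ρ * z)^2 + ρ^2 * (y + ((b - 1) / σ) * x)^2),
       -(σ + 1) / 2 - (1 / 2) * Real.sqrt ((σ - 2 * b + 1)^2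
          + (2 * σ / ρ - ρ * z)^2 + ρ^2 * (y + ((b - 1) / σ) * x)^2)} := by
  intro ρ A M
  have hM : M = !![b - σ - 1, -σ/ρ + ρ*z/2, -(ρ*(y + ((b-1)/σ)*x))/2;
                   -σ/ρ + ρ*z/2, -b, 0;
                   -(ρ*(y + ((b-1)/σ)*x))/2, 0, -b] := by
    have hA : M = (2 : ℝ)⁻¹ • (A + Aᵀ) := rfl
    rw [hA]
    ext i j
    rw [Matrix.smul_apply, Matrix.add_apply, Matrix.transpose_apply]
    fin_cases i <;> fin_cases j <;>
      simp only [A, Fin.zero_eta, Fin.mk_one, Fin.reduceFinMk, Matrix.of_apply,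
        Matrix.cons_val', Matrix.cons_val_zero, Matrix.cons_val_one,
        Matrix.head_cons, Matrix.empty_val', Matrix.cons_val_fin_one, Matrix.head_fin_const,
        Matrix.tail_cons, Matrix.cons_val_two, Matrix.cons_val_succ, Matrix.vecHead,
        Matrix.vecTail, Function.comp, smul_eq_mul, Fin.isValue] <;> ring
  have hch : M.charpoly = (X + C b) *
      (X^2 + C (σ + 1) * X +
        C (b * (σ - b + 1) - (σ / ρ - ρ * z / 2)^2
            - (ρ * (b - 1) * x / (2 * σ) + ρ * y / 2)^2)) := by
    apply Polynomial.funext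
    intro t
    have h1 : Polynomial.eval t M.charpoly
        = ((RingHom.mapMatrix (Polynomial.evalRingHom t)) (charmatrix M)).det := by
      rw [Matrix.charpoly, ← RingHom.map_det]; rfl
    have h2 : (RingHom.mapMatrix (Polynomial.evalRingHom t)) (charmatrix M)
        = !![t - (b - σ - 1), -(-σ/ρ + ρ*z/2), -(-(ρ*(y + ((b-1)/σ)*x))/2);
             -(-σ/ρ + ρ*z/2), t + b, 0;
             -(-(ρ*(y + ((b-1)/σ)*x))/2), 0, t + b] := by
      rw [hM]
      ext i j
      rw [RingHom.mapMatrix_apply, Matrix.map_apply]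
      fin_cases i <;> fin_cases j <;>
        simp [charmatrix_apply, Matrix.diagonal_apply, Matrix.vecHead, Matrix.vecTail] <;> ring
    rw [h1, h2, Matrix.det_fin_three]
    simp only [eval_mul, eval_add, eval_pow, eval_X, eval_C, Matrix.cons_val', Matrix.cons_val_zero,
      Matrix.cons_val_one, Matrix.head_cons, Matrix.empty_val', Matrix.cons_val_fin_one,
      Matrix.cons_val_two, Matrix.tail_cons, Matrix.head_fin_const, Matrix.of_apply,
      Matrix.vecHead, Matrix.vecTail, Function.comp, Matrix.cons_val_succ,
      Fin.succ_zero_eq_one, Fin.succ_one_eq_two]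
    ring
  refine ⟨hch, ?_⟩
  have hDnn : (0:ℝ) ≤ (σ - 2 * b + 1)^2
      + (2 * σ / ρ - ρ * z)^2 + ρ^2 * (y + ((b - 1) / σ) * x)^2 := by positivity
  have hs : Real.sqrt ((σ - 2 * b + 1)^2
        + (2 * σ / ρ - ρ * z)^2 + ρ^2 * (y + ((b - 1) / σ) * x)^2)
      * Real.sqrt ((σ - 2 * b + 1)^2
        + (2 * σ / ρ - ρ * z)^2 + ρ^2 * (y + ((b - 1) / σ) * x)^2)
      = (σ - 2 * b + 1)^2
        + (2 * σ / ρ - ρ * z)^2 + ρ^2 * (y + ((b - 1) / σ) * x)^2 :=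
    Real.mul_self_sqrt hDnn
  set s : ℝ := Real.sqrt ((σ - 2 * b + 1)^2
      + (2 * σ / ρ - ρ * z)^2 + ρ^2 * (y + ((b - 1) / σ) * x)^2) with hsdef
  ext μ
  rw [Set.mem_insert_iff, Set.mem_insert_iff, Set.mem_singleton_iff,
    spec_iff_charpoly', hch]
  simp only [eval_mul, eval_add, eval_pow, eval_X, eval_C]
  have hq : μ^2 + (σ + 1) * μ + (b * (σ - b + 1) - (σ / ρ - ρ * z / 2)^2
        - (ρ * (b - 1) * x / (2 * σ) + ρ * y / 2)^2)
      = (μ - (-(σ + 1) / 2 + (1 / 2) * s)) * (μ - (-(σ + 1) / 2 - (1 / 2) * s)) := by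
    linear_combination ((1:ℝ)/4) * hs
  rw [hq, mul_eq_zero, mul_eq_zero, sub_eq_zero, sub_eq_zero, add_eq_zero_iff_eq_neg]
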